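/- Let b : ℝⁿ → ℝⁿ be twice continuously differentiable, a : ℝⁿ → (n×n real symmetric matrices) continuously differentiable, and V : ℝⁿ → ℝ three times continuously differentiable in a neighborhood of a point x̄ with b(x̄) = 0 and ∇V(x̄) = 0, and suppose V satisfies the Hamilton–Jacobi equation ⟨∇V(x), b(x)⟩ + ½⟨∇V(x), a(x)∇V(x)⟩ = 0 in that neighborhood. Then the Hessian H = ∇²V(x̄) satisfies the matrix Riccati equation H·∇b(x̄) + (∇b(x̄))ᵀ·H + H·a(x̄)·H = 0; moreover, if H is invertible, then setting Q = −∇b(x̄) one has H⁻¹Qᵀ + QH⁻¹ = a(x̄). -/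

import Mathlib

open scoped BigOperators
open scoped Topology

/-- Euclidean inner product on ℝⁿ. -/
noncomputable def dotp {n : ℕ} (u v : Fin n → ℝ) : ℝ := ∑ i, u i * v i

/-- Partial derivative ∂f/∂xᵢ. -/
noncomputable def pd {n : ℕ} (f : (Fin n → ℝ) → ℝ) (i : Fin n) (x : Fin n → ℝ) : ℝ :=
  fderiv ℝ f x (Pi.single i 1)

/-- Gradient of a scalar field on ℝⁿ. -/
noncomputable def grad {n : ℕ} (f : (Fin n → ℝ) → ℝ) (x : Fin n → ℝ) : Fin n → ℝ :=
  fun i => pd f i x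

/-- If `G i` and `P i` all vanish at `0` and the sum `∑ i, G i t * P i t` vanishes near `0`,
then the sum of products of derivatives at `0` vanishes. -/
lemma sum_deriv_mul_eq_zero {n : ℕ} (G P : Fin n → ℝ → ℝ) (wG pP : Fin n → ℝ)
    (hG : ∀ i, HasDerivAt (G i) (wG i) 0) (hP : ∀ i, HasDerivAt (P i) (pP i) 0)
    (hG0 : ∀ i, G i 0 = 0) (hP0 : ∀ i, P i 0 = 0)
    (hz : ∀ᶠ t in 𝓝[≠] (0:ℝ), ∑ i, G i t * P i t = 0) :
    ∑ i, wG i * pP i = 0 := by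
  have hslope : ∀ (f : ℝ → ℝ) (t : ℝ), f 0 = 0 → slope f 0 t = f t / t := by
    intro f t hf
    rw [slope_def_field, hf]
    simp
  have hprod : Filter.Tendsto (fun t => ∑ i, slope (G i) 0 t * slope (P i) 0 t)
      (𝓝[≠] (0:ℝ)) (𝓝 (∑ i, wG i * pP i)) :=
    tendsto_finset_sum _ fun i _ =>
      (hasDerivAt_iff_tendsto_slope.mp (hG i)).mul (hasDerivAt_iff_tendsto_slope.mp (hP i))
  have heq : (fun t => ∑ i, slope (G i) 0 t * slope (P i) 0 t)
      =ᶠ[𝓝[≠] (0:ℝ)] fun _ => 0 := by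
    filter_upwards [hz, self_mem_nhdsWithin] with t ht hne
    have ht0 : (t : ℝ) ≠ 0 := hne
    have : ∀ i, slope (G i) 0 t * slope (P i) 0 t = (G i t * P i t) / (t * t) := by
      intro i
      rw [hslope _ _ (hG0 i), hslope _ _ (hP0 i), div_mul_div_comm]
    rw [Finset.sum_congr rfl fun i _ => this i, ← Finset.sum_div, ht]
    simp
  exact tendsto_nhds_unique hprod (Filter.Tendsto.congr' heq.symm tendsto_const_nhds)

/-- Near a fixed point x̄ of ẋ = b(x) at which ∇V(x̄) = 0, the Hessian H = ∇²V(x̄) of a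
solution V of the Hamilton–Jacobi equation satisfies the matrix Riccati equation
H∇b(x̄) + (∇b(x̄))ᵀH + H a(x̄) H = 0; if moreover H is invertible then, with Q = −∇b(x̄),
H⁻¹Qᵀ + QH⁻¹ = a(x̄). -/
theorem hessian_riccati_at_fixed_point {n : ℕ}
    (b : (Fin n → ℝ) → Fin n → ℝ)
    (a : (Fin n → ℝ) → Matrix (Fin n) (Fin n) ℝ)
    (V : (Fin n → ℝ) → ℝ)
    (xbar : Fin n → ℝ) (U : Set (Fin n → ℝ)) (hU : U ∈ nhds xbar)
    (hb : ContDiffOn ℝ 2 b U)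
    (ha : ∀ i j, ContDiffOn ℝ 1 (fun x => a x i j) U)
    (hsym : ∀ x i j, a x i j = a x j i)
    (hV : ContDiffOn ℝ 3 V U)
    (hbfix : b xbar = 0) (hgradfix : grad V xbar = 0)
    (hHJ : ∀ x ∈ U, dotp (grad V x) (b x)
        + (1 / 2) * dotp (grad V x) ((a x).mulVec (grad V x)) = 0)
    (H Db : Matrix (Fin n) (Fin n) ℝ)
    (hH : H = Matrix.of fun i j => pd (fun y => pd V j y) i xbar)
    (hDb : Db = Matrix.of fun i j => fderiv ℝ (fun y => b y i) xbar (Pi.single j 1)) :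
    H * Db + Db.transpose * H + H * a xbar * H = 0 ∧
      (IsUnit H → H⁻¹ * (-Db).transpose + (-Db) * H⁻¹ = a xbar) := by
  classical
  -- smoothness at the point
  have hVx : ContDiffAt ℝ 3 V xbar := hV.contDiffAt hU
  have hbx : ContDiffAt ℝ 2 b xbar := hb.contDiffAt hU
  have hdV2 : ContDiffAt ℝ 2 (fderiv ℝ V) xbar := hVx.fderiv_right (by norm_num)
  have hdV : DifferentiableAt ℝ (fderiv ℝ V) xbar := hdV2.differentiableAt (by norm_num)
  have hbd : DifferentiableAt ℝ b xbar := hbx.differentiableAt (by norm_num)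
  have hbdc : ∀ i, DifferentiableAt ℝ (fun y => b y i) xbar :=
    fun i => (differentiableAt_pi.mp hbd) i
  have had : ∀ i j, DifferentiableAt ℝ (fun x => a x i j) xbar :=
    fun i j => ((ha i j).contDiffAt hU).differentiableAt (by norm_num)
  have hgd : ∀ i, DifferentiableAt ℝ (fun y => pd V i y) xbar := by
    intro i
    exact hdV.clm_apply (differentiableAt_const _)
  have hgfd : ∀ (i : Fin n) (u : Fin n → ℝ), fderiv ℝ (fun y => pd V i y) xbar u
      = fderiv ℝ (fderiv ℝ V) xbar u (Pi.single i 1) := by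
    intro i u
    simp only [pd]
    rw [fderiv_clm_apply hdV (differentiableAt_const _)]
    simp
  have hHent : ∀ i j, H i j = fderiv ℝ (fderiv ℝ V) xbar (Pi.single i 1) (Pi.single j 1) := by
    intro i j
    rw [hH]
    show pd (fun y => pd V j y) i xbar = _
    rw [show pd (fun y => pd V j y) i xbar
        = fderiv ℝ (fun y => pd V j y) xbar (Pi.single i 1) from rfl, hgfd]
  have hsymm := hVx.isSymmSndFDerivAt (by norm_num)
  have hHsym : ∀ i j, H i j = H j i := by
    intro i j
    rw [hHent i j, hHent j i]
    exact hsymm _ _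
  have hg0 : ∀ i, pd V i xbar = 0 := by
    intro i
    simpa [grad] using congrFun hgradfix i
  -- expansion of continuous linear maps against the standard basis
  have expand : ∀ (f : (Fin n → ℝ) →L[ℝ] ℝ) (v : Fin n → ℝ),
      f v = ∑ k, v k * f (Pi.single k 1) := by
    intro f v
    have hv : v = ∑ k, v k • (Pi.single k 1 : Fin n → ℝ) := by
      funext j
      simp [Finset.sum_apply, Pi.single_apply]
    conv_lhs => rw [hv]
    rw [map_sum]
    simp [smul_eq_mul]
  -- the key quadratic identity
  have key : ∀ v : Fin n → ℝ,
      (∑ i, (∑ k, v k * H k i) *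
        ((∑ k, v k * Db i k) + (1/2) * ∑ j, a xbar i j * (∑ k, v k * H k j))) = 0 := by
    intro v
    have hcd : HasDerivAt (fun t : ℝ => xbar + t • v) v 0 := by
      have h1 : HasDerivAt (fun t : ℝ => t • v) ((1:ℝ) • v) 0 := (hasDerivAt_id 0).smul_const v
      simpa using h1.const_add xbar
    have hcomp : ∀ (g : (Fin n → ℝ) → ℝ), DifferentiableAt ℝ g xbar →
        HasDerivAt (fun t : ℝ => g (xbar + t • v)) (fderiv ℝ g xbar v) 0 := by
      intro g hg
      have hf : HasFDerivAt g (fderiv ℝ g xbar) (xbar + (0:ℝ) • v) := by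
        simpa using hg.hasFDerivAt
      exact hf.comp_hasDerivAt 0 hcd
    have hGd : ∀ i, HasDerivAt (fun t : ℝ => pd V i (xbar + t • v)) (∑ k, v k * H k i) 0 := by
      intro i
      have h1 := hcomp (fun y => pd V i y) (hgd i)
      have h2 : fderiv ℝ (fun y => pd V i y) xbar v = ∑ k, v k * H k i := by
        rw [expand (fderiv ℝ (fun y => pd V i y) xbar) v]
        exact Finset.sum_congr rfl fun k _ => by rw [hgfd, ← hHent]
      rwa [h2] at h1
    have hBd : ∀ i, HasDerivAt (fun t : ℝ => b (xbar + t • v) i) (∑ k, v k * Db i k) 0 := by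
      intro i
      have h1 := hcomp (fun y => b y i) (hbdc i)
      have h2 : fderiv ℝ (fun y => b y i) xbar v = ∑ k, v k * Db i k := by
        rw [expand (fderiv ℝ (fun y => b y i) xbar) v]
        exact Finset.sum_congr rfl fun k _ => by rw [hDb]; rfl
      rwa [h2] at h1
    have hPd : ∀ i, HasDerivAt
        (fun t : ℝ => b (xbar + t • v) i
          + (1/2) * ∑ j, a (xbar + t • v) i j * pd V j (xbar + t • v))
        ((∑ k, v k * Db i k) + (1/2) * ∑ j, a xbar i j * (∑ k, v k * H k j)) 0 := by
      intro i
      refine (hBd i).add (HasDerivAt.const_mul _ ?_)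
      refine HasDerivAt.fun_sum fun j _ => ?_
      have hA := hcomp (fun y => a y i j) (had i j)
      have hm := hA.fun_mul (hGd j)
      simpa [hg0 j] using hm
    have hG0' : ∀ i, (fun t : ℝ => pd V i (xbar + t • v)) 0 = 0 := by
      intro i; simpa using hg0 i
    have hP0' : ∀ i, (fun t : ℝ => b (xbar + t • v) i
        + (1/2) * ∑ j, a (xbar + t • v) i j * pd V j (xbar + t • v)) 0 = 0 := by
      intro i
      simp [hg0, hbfix]
    have hUc : ∀ᶠ t in 𝓝[≠] (0:ℝ), xbar + t • v ∈ U := by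
      have hct : Filter.Tendsto (fun t : ℝ => xbar + t • v) (𝓝 0) (𝓝 xbar) := by
        have := hcd.continuousAt.tendsto
        simpa using this
      exact (hct.eventually_mem hU).filter_mono nhdsWithin_le_nhds
    have hzero : ∀ᶠ t in 𝓝[≠] (0:ℝ),
        (∑ i, pd V i (xbar + t • v) * (b (xbar + t • v) i
          + (1/2) * ∑ j, a (xbar + t • v) i j * pd V j (xbar + t • v))) = 0 := by
      filter_upwards [hUc] with t ht
      have h0 := hHJ _ ht
      simp only [dotp, grad, Matrix.mulVec, dotProduct] at h0
      rw [← h0, Finset.mul_sum, ← Finset.sum_add_distrib]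
      refine Finset.sum_congr rfl fun i _ => ?_
      ring
    exact sum_deriv_mul_eq_zero _ _ _ _ hGd hPd hG0' hP0' hzero
  -- collapse `key` at basis vectors
  have singlesum : ∀ (m : Fin n) (X : Fin n → ℝ),
      (∑ k, (Pi.single m 1 : Fin n → ℝ) k * X k) = X m := by
    intro m X
    simp [Pi.single_apply, ite_mul]
  have pairsum : ∀ (m m' : Fin n) (X : Fin n → ℝ),
      (∑ k, (Pi.single m 1 + Pi.single m' 1 : Fin n → ℝ) k * X k) = X m + X m' := by
    intro m m' X
    simp only [Pi.add_apply, add_mul]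
    rw [Finset.sum_add_distrib, singlesum, singlesum]
  have hN : ∀ k l, (∑ i, H k i * (Db i l + (1/2) * ∑ j, a xbar i j * H l j))
      + (∑ i, H l i * (Db i k + (1/2) * ∑ j, a xbar i j * H k j)) = 0 := by
    intro k l
    have h1 := key (Pi.single k 1 + Pi.single l 1 : Fin n → ℝ)
    have h2 := key (Pi.single k 1)
    have h3 := key (Pi.single l 1)
    simp only [pairsum] at h1
    simp only [singlesum] at h2 h3
    have expand1 : (∑ i, (H k i + H l i) *
        ((Db i k + Db i l) + (1/2) * ∑ j, a xbar i j * (H k j + H l j)))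
        = (∑ i, H k i * (Db i k + (1/2) * ∑ j, a xbar i j * H k j))
        + (∑ i, H l i * (Db i l + (1/2) * ∑ j, a xbar i j * H l j))
        + ((∑ i, H k i * (Db i l + (1/2) * ∑ j, a xbar i j * H l j))
        + (∑ i, H l i * (Db i k + (1/2) * ∑ j, a xbar i j * H k j))) := by
      rw [← Finset.sum_add_distrib, ← Finset.sum_add_distrib, ← Finset.sum_add_distrib]
      refine Finset.sum_congr rfl fun i _ => ?_
      have hsplit : (∑ j, a xbar i j * (H k j + H l j))
          = (∑ j, a xbar i j * H k j) + (∑ j, a xbar i j * H l j) := by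
        rw [← Finset.sum_add_distrib]
        exact Finset.sum_congr rfl fun j _ => mul_add _ _ _
      rw [hsplit]
      ring
    rw [expand1, h2, h3] at h1
    linarith [h1]
  -- the Riccati equation, entrywise
  have R1 : H * Db + Db.transpose * H + H * a xbar * H = 0 := by
    ext k l
    have h := hN k l
    have step1 : (∑ i, H l i * Db i k) = ∑ i, Db i k * H i l :=
      Finset.sum_congr rfl fun i _ => by rw [hHsym i l]; ring
    have step2 : (∑ j, (∑ i, H k i * a xbar i j) * H j l)
        = ∑ i, H k i * (∑ j, a xbar i j * H l j) := by
      simp only [Finset.sum_mul, Finset.mul_sum]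
      rw [Finset.sum_comm]
      refine Finset.sum_congr rfl fun x _ => Finset.sum_congr rfl fun y _ => ?_
      rw [hHsym l y]; ring
    have step4 : (∑ i, H l i * (∑ j, a xbar i j * H k j))
        = ∑ i, H k i * (∑ j, a xbar i j * H l j) := by
      simp only [Finset.mul_sum]
      rw [Finset.sum_comm]
      refine Finset.sum_congr rfl fun x _ => Finset.sum_congr rfl fun y _ => ?_
      rw [hsym xbar x y]; ring
    have hA : (∑ i, H k i * (Db i l + (1/2) * ∑ j, a xbar i j * H l j))
        = (∑ i, H k i * Db i l)
          + (1/2) * (∑ i, H k i * (∑ j, a xbar i j * H l j)) := by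
      rw [Finset.mul_sum, ← Finset.sum_add_distrib]
      exact Finset.sum_congr rfl fun i _ => by ring
    have hB : (∑ i, H l i * (Db i k + (1/2) * ∑ j, a xbar i j * H k j))
        = (∑ i, Db i k * H i l)
          + (1/2) * (∑ i, H k i * (∑ j, a xbar i j * H l j)) := by
      have hB1 : (∑ i, H l i * (Db i k + (1/2) * ∑ j, a xbar i j * H k j))
          = (∑ i, H l i * Db i k)
            + (1/2) * (∑ i, H l i * (∑ j, a xbar i j * H k j)) := by
        rw [Finset.mul_sum, ← Finset.sum_add_distrib]
        exact Finset.sum_congr rfl fun i _ => by ring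
      rw [hB1, step1, step4]
    rw [hA, hB] at h
    simp only [Matrix.add_apply, Matrix.mul_apply, Matrix.transpose_apply, Matrix.zero_apply]
    rw [step2]
    linarith [h]
  refine ⟨R1, fun hHu => ?_⟩
  have hdet : IsUnit H.det := (Matrix.isUnit_iff_isUnit_det H).mp hHu
  have hinv : H⁻¹ * H = 1 := Matrix.nonsing_inv_mul H hdet
  have hinv' : H * H⁻¹ = 1 := Matrix.mul_nonsing_inv H hdet
  have t1 : H⁻¹ * (H * Db) * H⁻¹ = Db * H⁻¹ := by
    rw [← mul_assoc, hinv, one_mul]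
  have t2 : H⁻¹ * (Db.transpose * H) * H⁻¹ = H⁻¹ * Db.transpose := by
    rw [mul_assoc, mul_assoc, hinv', mul_one]
  have t3 : H⁻¹ * (H * a xbar * H) * H⁻¹ = a xbar := by
    rw [← mul_assoc, ← mul_assoc, hinv, one_mul, mul_assoc, hinv', mul_one]
  have h0 : H⁻¹ * (H * Db + Db.transpose * H + H * a xbar * H) * H⁻¹ = 0 := by
    rw [R1]
    simp
  rw [mul_add, mul_add, add_mul, add_mul, t1, t2, t3] at h0
  have h2 : a xbar = -(Db * H⁻¹ + H⁻¹ * Db.transpose) := by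
    have := h0
    linear_combination (norm := abel) this
  rw [h2, Matrix.transpose_neg]
  simp only [Matrix.neg_mul, Matrix.mul_neg, neg_add_rev]
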